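/- Let L ≥ 2, d_0 ≥ 1, d_L ≥ 1, and 1 ≤ r ≤ min{d_0, d_L}. Let U₁ ∈ ℝ^{d_L×r} and V₁ ∈ ℝ^{d_0×r} have orthonormal columns, let λ₁, …, λ_r > 0, and define G as in the general Gram-matrix construction. Suppose λ_i ∈ [m − δ, m + δ] for all i, with 0 < δ < m and (m + δ)/(m − δ) < L^{1/(2(L−1))}. Let E be a symmetric d_L d_0 × d_L d_0 real matrix with ‖E‖₂ ≤ ε. Then the eigenvalues of H := G + E, counted with multiplicity, split into three groups: (i) r² eigenvalues lying in [L(m − δ)^{2(L−1)} − ε, L(m + δ)^{2(L−1)} + ε]; (ii) (d_0 + d_L − 2r)r eigenvalues lying in [(m − δ)^{2(L−1)} − ε, (m + δ)^{2(L−1)} + ε]; (iii) (d_L − r)(d_0 − r) eigenvalues lying in [−ε, ε]. Moreover, if additionally ε < (m − δ)^{2(L−1)}, then for any eigenvalue λ_dom from group (i) and any eigenvalue λ_bulk from group (ii), L · ((m−δ)^{2(L−1)} − ε/L) / ((m+δ)^{2(L−1)} + ε) ≤ λ_dom/λ_bulk ≤ L · ((m+δ)^{2(L−1)} + ε/L)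 / ((m−δ)^{2(L−1)} − ε). -/

import Mathlib

open Matrix
open scoped Kronecker

/-- The spectral norm (largest singular value) of a real matrix, i.e. the operator norm of
the induced linear map between Euclidean spaces. -/
noncomputable def matSpectralNorm {m n : Type*} [Fintype m] [Fintype n] [DecidableEq n]
    (A : Matrix m n ℝ) : ℝ :=
  ‖LinearMap.toContinuousLinearMap (Matrix.toEuclideanLin A)‖

open Module
open scoped RealInnerProductSpace

set_option linter.unusedSectionVars false
set_option maxHeartbeats 1000000

namespace Statement16Aux

/-! ### Cardinality helpers on `Fin n` -/

lemma card_filter_Ico {n : ℕ} (a b : ℕ) (h1 : a ≤ b) (h2 : b ≤ n) :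
    ((Finset.univ : Finset (Fin n)).filter fun k : Fin n => a ≤ (k : ℕ) ∧ (k : ℕ) < b).card
      = b - a := by
  apply Finset.card_eq_of_bijective (fun i hi => (⟨a + i, by omega⟩ : Fin n))
  · intro x hx
    rw [Finset.mem_filter] at hx
    exact ⟨(x : ℕ) - a, by omega, by apply Fin.ext; simp; omega⟩
  · intro i hi
    rw [Finset.mem_filter]
    refine ⟨Finset.mem_univ _, ?_, ?_⟩ <;> simp <;> omega
  · intro i j hi hj hij
    have := Fin.val_eq_of_eq hij
    simpa using this

lemma card_filter_lt {n : ℕ} (t : ℕ) (h : t ≤ n) :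
    ((Finset.univ : Finset (Fin n)).filter fun k : Fin n => (k : ℕ) < t).card = t := by
  have h1 := card_filter_Ico (n := n) 0 t (Nat.zero_le _) h
  have h2 : ((Finset.univ : Finset (Fin n)).filter fun k : Fin n => 0 ≤ (k : ℕ) ∧ (k : ℕ) < t)
      = (Finset.univ : Finset (Fin n)).filter fun k : Fin n => (k : ℕ) < t := by
    apply Finset.filter_congr
    intro k _
    simp
  rw [h2] at h1
  omega

lemma card_filter_ge {n : ℕ} (t : ℕ) (h : t ≤ n) :
    ((Finset.univ : Finset (Fin n)).filter fun k : Fin n => t ≤ (k : ℕ)).card = n - t := by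
  have h1 := Finset.card_filter_add_card_filter_not
    (s := (Finset.univ : Finset (Fin n))) (p := fun k : Fin n => (k : ℕ) < t)
  have h2 : ((Finset.univ : Finset (Fin n)).filter fun k : Fin n => ¬ ((k : ℕ) < t))
      = (Finset.univ : Finset (Fin n)).filter fun k : Fin n => t ≤ (k : ℕ) := by
    apply Finset.filter_congr
    intro k _
    simp
  rw [h2, card_filter_lt t h, Finset.card_univ, Fintype.card_fin] at h1
  omega

lemma card_filter_not_lt {n : ℕ} (t : ℕ) (h : t ≤ n) :
    ((Finset.univ : Finset (Fin n)).filter fun k : Fin n => ¬ ((k : ℕ) < t)).card = n - t := by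
  rw [show ((Finset.univ : Finset (Fin n)).filter fun k : Fin n => ¬ ((k : ℕ) < t))
      = (Finset.univ : Finset (Fin n)).filter fun k : Fin n => t ≤ (k : ℕ) from
    Finset.filter_congr fun k _ => by simp]
  exact card_filter_ge t h

lemma card_filter_equiv {α β : Type*} [Fintype α] [Fintype β] [DecidableEq β]
    (e : α ≃ β) (p : β → Prop) [DecidablePred p] :
    ((Finset.univ : Finset α).filter fun a => p (e a)).card
      = ((Finset.univ : Finset β).filter p).card := by
  apply Finset.card_bij (fun a _ => e a)
  · intro a ha
    rw [Finset.mem_filter] at *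
    exact ⟨Finset.mem_univ _, ha.2⟩
  · intro a _ b _ hab
    exact e.injective hab
  · intro b hb
    rw [Finset.mem_filter] at hb
    exact ⟨e.symm b, by rw [Finset.mem_filter]; simpa using hb.2, by simp⟩

lemma mono_tail {n : ℕ} {g : Fin n → ℝ} (hg : Monotone g) {c : ℝ} {t : ℕ}
    (hcount : t ≤ ((Finset.univ : Finset (Fin n)).filter fun k => c ≤ g k).card) :
    ∀ k : Fin n, n - t ≤ (k : ℕ) → c ≤ g k := by
  intro k hk
  by_contra hlt
  push_neg at hlt
  have hsub : ((Finset.univ : Finset (Fin n)).filter fun k => c ≤ g k)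
      ⊆ (Finset.univ : Finset (Fin n)).filter
          fun j : Fin n => (k : ℕ) + 1 ≤ (j : ℕ) ∧ (j : ℕ) < n := by
    intro j hj
    rw [Finset.mem_filter] at *
    refine ⟨Finset.mem_univ _, ?_, j.2⟩
    by_contra hle
    have hjk : j ≤ k := by
      rw [Fin.le_def]; omega
    exact absurd (le_trans hj.2 (hg hjk)) (not_le.mpr hlt)
  have hcard := Finset.card_le_card hsub
  rw [card_filter_Ico ((k : ℕ) + 1) n (by omega) le_rfl] at hcard
  have hkn := k.2
  omega

lemma mono_head {n : ℕ} {g : Fin n → ℝ} (hg : Monotone g) {c : ℝ} {t : ℕ}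
    (hcount : t ≤ ((Finset.univ : Finset (Fin n)).filter fun k => g k ≤ c).card) :
    ∀ k : Fin n, (k : ℕ) < t → g k ≤ c := by
  intro k hk
  by_contra hlt
  push_neg at hlt
  have hsub : ((Finset.univ : Finset (Fin n)).filter fun k => g k ≤ c)
      ⊆ (Finset.univ : Finset (Fin n)).filter
          fun j : Fin n => 0 ≤ (j : ℕ) ∧ (j : ℕ) < (k : ℕ) := by
    intro j hj
    rw [Finset.mem_filter] at *
    refine ⟨Finset.mem_univ _, Nat.zero_le _, ?_⟩
    by_contra hle
    have hjk : k ≤ j := by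
      rw [Fin.le_def]; omega
    exact absurd (le_trans (hg hjk) hj.2) (not_le.mpr hlt)
  have hcard := Finset.card_le_card hsub
  rw [card_filter_Ico 0 (k : ℕ) (Nat.zero_le _) (le_of_lt k.2)] at hcard
  omega

/-! ### Quadratic forms and eigen decompositions -/

variable {ι : Type*} [Fintype ι] [DecidableEq ι]

lemma inner_self_eq_sum (w : OrthonormalBasis ι ℝ (EuclideanSpace ℝ ι)) (x : EuclideanSpace ℝ ι) :
    ⟪x, x⟫ = ∑ p, ⟪w p, x⟫ ^ 2 := by
  conv_lhs => rw [← w.sum_repr' x]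
  rw [sum_inner]
  refine Finset.sum_congr rfl fun p _ => ?_
  rw [real_inner_smul_left, w.sum_repr' x]
  ring

lemma quadform_eigen (M : Matrix ι ι ℝ) (w : OrthonormalBasis ι ℝ (EuclideanSpace ℝ ι))
    (d : ι → ℝ) (hw : ∀ p, Matrix.toEuclideanLin M (w p) = d p • w p)
    (x : EuclideanSpace ℝ ι) :
    ⟪x, Matrix.toEuclideanLin M x⟫ = ∑ p, d p * ⟪w p, x⟫ ^ 2 := by
  conv_lhs => rw [show Matrix.toEuclideanLin M x
    = Matrix.toEuclideanLin M (∑ p, ⟪w p, x⟫ • w p) by rw [w.sum_repr' x]]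
  rw [map_sum, inner_sum]
  refine Finset.sum_congr rfl fun p _ => ?_
  rw [LinearMap.map_smul, hw p, real_inner_smul_right, real_inner_smul_right, real_inner_comm]
  ring

lemma inner_eq_zero_of_mem_span {v : ι → EuclideanSpace ℝ ι} (hv : Orthonormal ℝ v)
    (S : Finset ι) {x : EuclideanSpace ℝ ι} (hx : x ∈ Submodule.span ℝ (v '' ↑S)) :
    ∀ p ∉ S, ⟪v p, x⟫ = 0 := by
  intro p hp
  induction hx using Submodule.span_induction with
  | mem y hy =>
    obtain ⟨q, hq, rfl⟩ := hy
    exact hv.2 (fun h => hp (h ▸ hq))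
  | zero => exact inner_zero_right _
  | add y z _ _ hy hz => rw [inner_add_right, hy, hz, add_zero]
  | smul a y _ hy => rw [real_inner_smul_right, hy, mul_zero]

lemma finrank_span_image (v : ι → EuclideanSpace ℝ ι) (hv : Orthonormal ℝ v) (S : Finset ι) :
    Module.finrank ℝ (Submodule.span ℝ (v '' ↑S)) = S.card := by
  have h1 : v '' ↑S = Set.range (v ∘ (Subtype.val : {p // p ∈ S} → ι)) := by
    simp [Set.range_comp, Subtype.range_coe_subtype, Finset.setOf_mem]
  rw [h1, finrank_span_eq_card (hv.linearIndependent.comp _ Subtype.coe_injective),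
    Fintype.card_coe]

lemma exists_common_vector (V W : Submodule ℝ (EuclideanSpace ℝ ι))
    (h : Fintype.card ι < finrank ℝ V + finrank ℝ W) :
    ∃ x : EuclideanSpace ℝ ι, x ≠ 0 ∧ x ∈ V ∧ x ∈ W := by
  have h1 := Submodule.finrank_sup_add_finrank_inf_eq V W
  have h2 : finrank ℝ (V ⊔ W : Submodule ℝ (EuclideanSpace ℝ ι)) ≤ Fintype.card ι := by
    simpa [finrank_euclideanSpace] using (V ⊔ W).finrank_le
  have h3 : 0 < finrank ℝ (V ⊓ W : Submodule ℝ (EuclideanSpace ℝ ι)) := by omega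
  rw [finrank_pos_iff_exists_ne_zero] at h3
  obtain ⟨⟨x, hx⟩, hx0⟩ := h3
  exact ⟨x, by simpa using hx0, hx.1, hx.2⟩

/-! ### The two counting lemmas (Courant–Fischer style) -/

lemma card_le_count_ge (M : Matrix ι ι ℝ) (hM : M.IsHermitian)
    (w : OrthonormalBasis ι ℝ (EuclideanSpace ℝ ι)) (S : Finset ι) (c : ℝ)
    (hray : ∀ x : EuclideanSpace ℝ ι, (∀ p ∉ S, ⟪w p, x⟫ = 0) →
      c * ⟪x, x⟫ ≤ ⟪x, Matrix.toEuclideanLin M x⟫) :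
    S.card ≤ (Finset.univ.filter fun i => c ≤ hM.eigenvalues i).card := by
  by_contra hcon
  push_neg at hcon
  set b := hM.eigenvectorBasis with hb
  set T : Finset ι := Finset.univ.filter fun i => hM.eigenvalues i < c with hT
  have hsplit : T.card + (Finset.univ.filter fun i => c ≤ hM.eigenvalues i).card
      = Fintype.card ι := by
    rw [hT]
    have := Finset.card_filter_add_card_filter_not
      (s := (Finset.univ : Finset ι)) (p := fun i => hM.eigenvalues i < c)
    simpa [not_lt, Finset.card_univ] using this
  obtain ⟨x, hx0, hxV, hxW⟩ := exists_common_vector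
      (Submodule.span ℝ (⇑w '' ↑S)) (Submodule.span ℝ (⇑b '' ↑T)) (by
    rw [finrank_span_image _ w.orthonormal, finrank_span_image _ b.orthonormal]
    omega)
  have h1 := hray x (inner_eq_zero_of_mem_span w.orthonormal S hxV)
  have hzero : ∀ i ∉ T, ⟪b i, x⟫ = 0 := inner_eq_zero_of_mem_span b.orthonormal T hxW
  have h2 : ⟪x, Matrix.toEuclideanLin M x⟫ = ∑ i, hM.eigenvalues i * ⟪b i, x⟫ ^ 2 :=
    quadform_eigen M b hM.eigenvalues (fun i => by rw [Matrix.toEuclideanLin_apply, hM.mulVec_eigenvectorBasis i]; rfl) x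
  have h3 : ⟪x, x⟫ = ∑ i, ⟪b i, x⟫ ^ 2 := inner_self_eq_sum b x
  have hex : ∃ i, ⟪b i, x⟫ ≠ 0 := by
    by_contra hall
    push_neg at hall
    apply hx0
    rw [← b.sum_repr' x]
    simp [hall]
  obtain ⟨i0, hi0⟩ := hex
  have hi0T : i0 ∈ T := by
    by_contra h
    exact hi0 (hzero i0 h)
  have hstrict : ∑ i, hM.eigenvalues i * ⟪b i, x⟫ ^ 2 < ∑ i, c * ⟪b i, x⟫ ^ 2 := by
    apply Finset.sum_lt_sum
    · intro i _
      by_cases hiT : i ∈ T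
      · have : hM.eigenvalues i < c := by
          rw [hT] at hiT; exact (Finset.mem_filter.mp hiT).2
        exact mul_le_mul_of_nonneg_right this.le (sq_nonneg _)
      · rw [hzero i hiT]; simp
    · refine ⟨i0, Finset.mem_univ _, ?_⟩
      have hlt : hM.eigenvalues i0 < c := by
        rw [hT] at hi0T; exact (Finset.mem_filter.mp hi0T).2
      exact mul_lt_mul_of_pos_right hlt (by positivity)
  rw [h2, h3] at h1
  rw [← Finset.mul_sum] at hstrict
  linarith

lemma card_le_count_le (M : Matrix ι ι ℝ) (hM : M.IsHermitian)
    (w : OrthonormalBasis ι ℝ (EuclideanSpace ℝ ι)) (S : Finset ι) (c : ℝ)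
    (hray : ∀ x : EuclideanSpace ℝ ι, (∀ p ∉ S, ⟪w p, x⟫ = 0) →
      ⟪x, Matrix.toEuclideanLin M x⟫ ≤ c * ⟪x, x⟫) :
    S.card ≤ (Finset.univ.filter fun i => hM.eigenvalues i ≤ c).card := by
  by_contra hcon
  push_neg at hcon
  set b := hM.eigenvectorBasis with hb
  set T : Finset ι := Finset.univ.filter fun i => c < hM.eigenvalues i with hT
  have hsplit : T.card + (Finset.univ.filter fun i => hM.eigenvalues i ≤ c).card
      = Fintype.card ι := by
    rw [hT]
    have := Finset.card_filter_add_card_filter_not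
      (s := (Finset.univ : Finset ι)) (p := fun i => c < hM.eigenvalues i)
    simpa [not_lt, Finset.card_univ] using this
  obtain ⟨x, hx0, hxV, hxW⟩ := exists_common_vector
      (Submodule.span ℝ (⇑w '' ↑S)) (Submodule.span ℝ (⇑b '' ↑T)) (by
    rw [finrank_span_image _ w.orthonormal, finrank_span_image _ b.orthonormal]
    omega)
  have h1 := hray x (inner_eq_zero_of_mem_span w.orthonormal S hxV)
  have hzero : ∀ i ∉ T, ⟪b i, x⟫ = 0 := inner_eq_zero_of_mem_span b.orthonormal T hxW
  have h2 : ⟪x, Matrix.toEuclideanLin M x⟫ = ∑ i, hM.eigenvalues i * ⟪b i, x⟫ ^ 2 :=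
    quadform_eigen M b hM.eigenvalues (fun i => by rw [Matrix.toEuclideanLin_apply, hM.mulVec_eigenvectorBasis i]; rfl) x
  have h3 : ⟪x, x⟫ = ∑ i, ⟪b i, x⟫ ^ 2 := inner_self_eq_sum b x
  have hex : ∃ i, ⟪b i, x⟫ ≠ 0 := by
    by_contra hall
    push_neg at hall
    apply hx0
    rw [← b.sum_repr' x]
    simp [hall]
  obtain ⟨i0, hi0⟩ := hex
  have hi0T : i0 ∈ T := by
    by_contra h
    exact hi0 (hzero i0 h)
  have hstrict : ∑ i, c * ⟪b i, x⟫ ^ 2 < ∑ i, hM.eigenvalues i * ⟪b i, x⟫ ^ 2 := by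
    apply Finset.sum_lt_sum
    · intro i _
      by_cases hiT : i ∈ T
      · have : c < hM.eigenvalues i := by
          rw [hT] at hiT; exact (Finset.mem_filter.mp hiT).2
        exact mul_le_mul_of_nonneg_right this.le (sq_nonneg _)
      · rw [hzero i hiT]; simp
    · refine ⟨i0, Finset.mem_univ _, ?_⟩
      have hlt : c < hM.eigenvalues i0 := by
        rw [hT] at hi0T; exact (Finset.mem_filter.mp hi0T).2
      exact mul_lt_mul_of_pos_right hlt (by positivity)
  rw [h2, h3] at h1
  rw [← Finset.mul_sum] at hstrict
  linarith

/-! ### Rayleigh-quotient bounds for the perturbed matrix -/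

lemma abs_inner_toEuclideanLin_le (E : Matrix ι ι ℝ) (x : EuclideanSpace ℝ ι) :
    |⟪x, Matrix.toEuclideanLin E x⟫| ≤ matSpectralNorm E * ⟪x, x⟫ := by
  have h1 : |⟪x, Matrix.toEuclideanLin E x⟫| ≤ ‖x‖ * ‖Matrix.toEuclideanLin E x‖ :=
    abs_real_inner_le_norm _ _
  have h2 : ‖Matrix.toEuclideanLin E x‖ ≤ matSpectralNorm E * ‖x‖ :=
    (LinearMap.toContinuousLinearMap (Matrix.toEuclideanLin E)).le_opNorm x
  have h3 : ⟪x, x⟫ = ‖x‖ ^ 2 := real_inner_self_eq_norm_sq x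
  rw [h3]
  nlinarith [norm_nonneg x, norm_nonneg (Matrix.toEuclideanLin E x)]

lemma rayleigh_lower (M E : Matrix ι ι ℝ) (w : OrthonormalBasis ι ℝ (EuclideanSpace ℝ ι))
    (d : ι → ℝ) (hw : ∀ p, Matrix.toEuclideanLin M (w p) = d p • w p)
    (ε : ℝ) (hEn : matSpectralNorm E ≤ ε) (S : Finset ι) (a : ℝ) (hd : ∀ p ∈ S, a ≤ d p)
    (x : EuclideanSpace ℝ ι) (hx : ∀ p ∉ S, ⟪w p, x⟫ = 0) :
    (a - ε) * ⟪x, x⟫ ≤ ⟪x, Matrix.toEuclideanLin (M + E) x⟫ := by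
  have hadd : ⟪x, Matrix.toEuclideanLin (M + E) x⟫
      = ⟪x, Matrix.toEuclideanLin M x⟫ + ⟪x, Matrix.toEuclideanLin E x⟫ := by
    rw [map_add, LinearMap.add_apply, inner_add_right]
  have hself : ⟪x, x⟫ = ∑ p, ⟪w p, x⟫ ^ 2 := inner_self_eq_sum w x
  have hM : a * ⟪x, x⟫ ≤ ⟪x, Matrix.toEuclideanLin M x⟫ := by
    rw [quadform_eigen M w d hw x, hself, Finset.mul_sum]
    apply Finset.sum_le_sum
    intro p _
    by_cases hp : p ∈ S
    · exact mul_le_mul_of_nonneg_right (hd p hp) (sq_nonneg _)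
    · rw [hx p hp]; simp
  have hself_nonneg : (0 : ℝ) ≤ ⟪x, x⟫ := real_inner_self_nonneg
  have hEb := abs_inner_toEuclideanLin_le E x
  have hE2 : -(ε * ⟪x, x⟫) ≤ ⟪x, Matrix.toEuclideanLin E x⟫ := by
    have := abs_le.mp hEb
    nlinarith
  rw [hadd]
  nlinarith

lemma rayleigh_upper (M E : Matrix ι ι ℝ) (w : OrthonormalBasis ι ℝ (EuclideanSpace ℝ ι))
    (d : ι → ℝ) (hw : ∀ p, Matrix.toEuclideanLin M (w p) = d p • w p)
    (ε : ℝ) (hEn : matSpectralNorm E ≤ ε) (S : Finset ι) (a : ℝ) (hd : ∀ p ∈ S, d p ≤ a)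
    (x : EuclideanSpace ℝ ι) (hx : ∀ p ∉ S, ⟪w p, x⟫ = 0) :
    ⟪x, Matrix.toEuclideanLin (M + E) x⟫ ≤ (a + ε) * ⟪x, x⟫ := by
  have hadd : ⟪x, Matrix.toEuclideanLin (M + E) x⟫
      = ⟪x, Matrix.toEuclideanLin M x⟫ + ⟪x, Matrix.toEuclideanLin E x⟫ := by
    rw [map_add, LinearMap.add_apply, inner_add_right]
  have hself : ⟪x, x⟫ = ∑ p, ⟪w p, x⟫ ^ 2 := inner_self_eq_sum w x
  have hM : ⟪x, Matrix.toEuclideanLin M x⟫ ≤ a * ⟪x, x⟫ := by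
    rw [quadform_eigen M w d hw x, hself, Finset.mul_sum]
    apply Finset.sum_le_sum
    intro p _
    by_cases hp : p ∈ S
    · exact mul_le_mul_of_nonneg_right (hd p hp) (sq_nonneg _)
    · rw [hx p hp]; simp
  have hself_nonneg : (0 : ℝ) ≤ ⟪x, x⟫ := real_inner_self_nonneg
  have hEb := abs_inner_toEuclideanLin_le E x
  have hE2 : ⟪x, Matrix.toEuclideanLin E x⟫ ≤ ε * ⟪x, x⟫ := by
    have := abs_le.mp hEb
    nlinarith
  rw [hadd]
  nlinarith

lemma sum_mulVec' {m n α : Type*} [Fintype n] [NonUnitalNonAssocSemiring α]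
    {β : Type*} (s : Finset β) (A : β → Matrix m n α) (x : n → α) :
    (∑ l ∈ s, A l) *ᵥ x = ∑ l ∈ s, (A l) *ᵥ x := by
  funext i
  simp only [Matrix.mulVec, dotProduct, Finset.sum_apply, Finset.sum_mul,
    Matrix.sum_apply]
  rw [Finset.sum_comm]

lemma kron_mulVec {m n : Type*} [Fintype m] [Fintype n]
    (A : Matrix m m ℝ) (B : Matrix n n ℝ) (x : m → ℝ) (y : n → ℝ) :
    (A ⊗ₖ B) *ᵥ (fun q : m × n => x q.1 * y q.2) =
      fun q : m × n => (A *ᵥ x) q.1 * (B *ᵥ y) q.2 := by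
  funext q
  simp only [mulVec, dotProduct, kroneckerMap_apply]
  rw [Fintype.sum_prod_type, Finset.sum_mul_sum]
  congr 1; funext c; congr 1; funext d
  ring

lemma sandwich_mulVec {n r : ℕ} (hrn : r ≤ n) (U : Matrix (Fin n) (Fin r) ℝ)
    (b : OrthonormalBasis (Fin n) ℝ (EuclideanSpace ℝ (Fin n)))
    (hb : ∀ (i : Fin n) (h : (i : ℕ) < r) (a : Fin n), b i a = U a ⟨(i : ℕ), h⟩)
    (f : Fin r → ℝ) (i : Fin n) :
    (U * Matrix.diagonal f * Uᵀ) *ᵥ (b i : EuclideanSpace ℝ (Fin n)) =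
      (if h : (i : ℕ) < r then f ⟨(i : ℕ), h⟩ else 0) • (b i : EuclideanSpace ℝ (Fin n)) := by
  have key : ∀ j : Fin r, ∑ c : Fin n, U c j * b i c
      = if (j : ℕ) = (i : ℕ) then 1 else 0 := by
    intro j
    have hj : (j : ℕ) < n := lt_of_lt_of_le j.2 hrn
    have hcol : ∀ c : Fin n, U c j = b ⟨(j : ℕ), hj⟩ c := by
      intro c
      rw [hb ⟨(j : ℕ), hj⟩ j.2 c]
    have horth := orthonormal_iff_ite.mp b.orthonormal ⟨(j : ℕ), hj⟩ i
    have hinner : ⟪b ⟨(j : ℕ), hj⟩, b i⟫ = ∑ c : Fin n, b ⟨(j : ℕ), hj⟩ c * b i c := by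
      simp [PiLp.inner_apply, RCLike.inner_apply, map_id]
      exact Finset.sum_congr rfl fun _ _ => mul_comm _ _
    rw [hinner] at horth
    simp only [hcol]
    rw [horth]
    by_cases h : (⟨(j : ℕ), hj⟩ : Fin n) = i
    · have : (j : ℕ) = (i : ℕ) := by rw [← h]
      simp [h, this]
    · have : ¬ (j : ℕ) = (i : ℕ) := by
        intro hc; exact h (Fin.ext hc)
      simp [h, this]
  funext a
  have entry : ∀ c, (U * Matrix.diagonal f * Uᵀ) a c = ∑ j : Fin r, U a j * f j * U c j := by
    intro c
    rw [Matrix.mul_apply]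
    simp only [Matrix.mul_diagonal, Matrix.transpose_apply]
  have expand : ((U * Matrix.diagonal f * Uᵀ) *ᵥ (b i : EuclideanSpace ℝ (Fin n))) a
      = ∑ j : Fin r, U a j * f j * (∑ c : Fin n, U c j * b i c) := by
    simp only [mulVec, dotProduct, entry, Finset.sum_mul]
    rw [Finset.sum_comm]
    refine Finset.sum_congr rfl fun j _ => ?_
    rw [Finset.mul_sum]
    refine Finset.sum_congr rfl fun c _ => ?_
    ring
  rw [expand]
  simp only [key]
  by_cases h : (i : ℕ) < r
  · rw [dif_pos h, Finset.sum_eq_single (⟨(i : ℕ), h⟩ : Fin r)]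
    · rw [Pi.smul_apply, smul_eq_mul, hb i h a]
      simp [mul_comm]
    · intro j _ hj
      have : ¬ (j : ℕ) = (i : ℕ) := by
        intro hc; exact hj (by apply Fin.ext; simp [hc])
      simp [this]
    · intro hmem; exact absurd (Finset.mem_univ _) hmem
  · rw [dif_neg h]
    have : ∀ j : Fin r, ¬ (j : ℕ) = (i : ℕ) := by
      intro j hc
      exact h (hc ▸ j.2)
    simp [this]

lemma exists_extension {n r : ℕ} (U : Matrix (Fin n) (Fin r) ℝ)
    (hU : Uᵀ * U = 1) :
    ∃ b : OrthonormalBasis (Fin n) ℝ (EuclideanSpace ℝ (Fin n)),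
      ∀ (i : Fin n) (h : (i : ℕ) < r) (a : Fin n), b i a = U a ⟨(i : ℕ), h⟩ := by
  classical
  set v : Fin n → EuclideanSpace ℝ (Fin n) := fun i =>
    if h : (i : ℕ) < r then (WithLp.equiv 2 (Fin n → ℝ)).symm (fun a => U a ⟨(i : ℕ), h⟩)
    else 0 with hv
  have hvON : Orthonormal ℝ (Set.restrict {i : Fin n | (i : ℕ) < r} v) := by
    rw [orthonormal_iff_ite]
    rintro ⟨i, hi⟩ ⟨j, hj⟩
    have hval : ⟪Set.restrict {i : Fin n | (i : ℕ) < r} v ⟨i, hi⟩,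
        Set.restrict {i : Fin n | (i : ℕ) < r} v ⟨j, hj⟩⟫
        = ∑ a : Fin n, U a ⟨(i : ℕ), hi⟩ * U a ⟨(j : ℕ), hj⟩ := by
      have hi' : ((i : Fin n) : ℕ) < r := hi
      have hj' : ((j : Fin n) : ℕ) < r := hj
      simp only [Set.restrict_apply, hv, dif_pos hi', dif_pos hj']
      simp [PiLp.inner_apply, RCLike.inner_apply]
      refine Finset.sum_congr rfl fun x _ => ?_
      show ((if h : (j : ℕ) < r then WithLp.toLp 2 (fun a => U a ⟨(j : ℕ), h⟩) else 0 :
          EuclideanSpace ℝ (Fin n))).ofLp x * ((if h : (i : ℕ) < r then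
          WithLp.toLp 2 (fun a => U a ⟨(i : ℕ), h⟩) else 0 : EuclideanSpace ℝ (Fin n))).ofLp x = _
      rw [dif_pos hj', dif_pos hi']
      exact mul_comm _ _
    rw [hval]
    have : (Uᵀ * U) ⟨(i : ℕ), hi⟩ ⟨(j : ℕ), hj⟩ = ∑ a, U a ⟨(i : ℕ), hi⟩ * U a ⟨(j : ℕ), hj⟩ := by
      simp [Matrix.mul_apply, Matrix.transpose_apply]
    rw [← this, hU, Matrix.one_apply]
    by_cases hij : (⟨(i : ℕ), hi⟩ : Fin r) = ⟨(j : ℕ), hj⟩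
    · have h2 : (⟨i, hi⟩ : {i : Fin n | (i : ℕ) < r}) = ⟨j, hj⟩ := by
        have := Fin.val_eq_of_eq hij
        apply Subtype.ext; apply Fin.ext; simpa using this
      simp [hij, h2]
    · have h2 : (⟨i, hi⟩ : {i : Fin n | (i : ℕ) < r}) ≠ ⟨j, hj⟩ := by
        intro hc
        apply hij
        apply Fin.ext
        have hij2 : i = j := by simpa using hc
        simp [hij2]
      simp [hij, h2]
  obtain ⟨b, hb⟩ := hvON.exists_orthonormalBasis_extension_of_card_eq
    (by simp [finrank_euclideanSpace])
  refine ⟨b, fun i h a => ?_⟩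
  rw [hb i h]
  simp only [hv, dif_pos h]
  rfl

/-- The full orthonormal eigenbasis of the Gram matrix `G`, with its eigenvalues. -/
lemma exists_w {L d0 dL r : ℕ} (hrd0 : r ≤ d0) (hrdL : r ≤ dL)
    (U1 : Matrix (Fin dL) (Fin r) ℝ) (V1 : Matrix (Fin d0) (Fin r) ℝ)
    (hU1 : U1ᵀ * U1 = 1) (hV1 : V1ᵀ * V1 = 1)
    (lam : Fin r → ℝ)
    (G : Matrix (Fin dL × Fin d0) (Fin dL × Fin d0) ℝ)
    (hGdef : G =
      (U1 * Matrix.diagonal (fun i => lam i ^ (2 * (L - 1))) * U1ᵀ) ⊗ₖ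
          (1 : Matrix (Fin d0) (Fin d0) ℝ) +
        (1 : Matrix (Fin dL) (Fin dL) ℝ) ⊗ₖ
          (V1 * Matrix.diagonal (fun i => lam i ^ (2 * (L - 1))) * V1ᵀ) +
        ∑ l ∈ Finset.Icc 2 (L - 1),
          (U1 * Matrix.diagonal (fun i => lam i ^ (2 * (L - l))) * U1ᵀ) ⊗ₖ
            (V1 * Matrix.diagonal (fun i => lam i ^ (2 * (l - 1))) * V1ᵀ)) :
    ∃ (w : OrthonormalBasis (Fin dL × Fin d0) ℝ (EuclideanSpace ℝ (Fin dL × Fin d0)))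
      (d : Fin dL × Fin d0 → ℝ),
      (∀ p, Matrix.toEuclideanLin G (w p) = d p • w p) ∧
      (∀ p, d p =
        (if h : (p.1 : ℕ) < r then lam ⟨(p.1 : ℕ), h⟩ ^ (2 * (L - 1)) else 0)
        + (if h : (p.2 : ℕ) < r then lam ⟨(p.2 : ℕ), h⟩ ^ (2 * (L - 1)) else 0)
        + ∑ l ∈ Finset.Icc 2 (L - 1),
            (if h : (p.1 : ℕ) < r then lam ⟨(p.1 : ℕ), h⟩ ^ (2 * (L - l)) else 0)
            * (if h : (p.2 : ℕ) < r then lam ⟨(p.2 : ℕ), h⟩ ^ (2 * (l - 1)) else 0)) := by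
  classical
  obtain ⟨bU, hbU⟩ := exists_extension U1 hU1
  obtain ⟨bV, hbV⟩ := exists_extension V1 hV1
  set wfun : Fin dL × Fin d0 → (Fin dL × Fin d0 → ℝ) :=
    fun p => fun q => bU p.1 q.1 * bV p.2 q.2 with hwfun
  set w0 : Fin dL × Fin d0 → EuclideanSpace ℝ (Fin dL × Fin d0) :=
    fun p => (WithLp.equiv 2 (Fin dL × Fin d0 → ℝ)).symm (wfun p) with hw0
  have hinner : ∀ p p', ⟪w0 p, w0 p'⟫ = ⟪bU p.1, bU p'.1⟫ * ⟪bV p.2, bV p'.2⟫ := by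
    intro p p'
    simp only [hw0, hwfun]
    simp only [PiLp.inner_apply, RCLike.inner_apply, starRingEnd_apply, star_trivial,
      WithLp.equiv_symm_apply, WithLp.ofLp_toLp]
    rw [Fintype.sum_prod_type, Finset.sum_mul_sum]
    congr 1; funext c; congr 1; funext e
    ring
  have hON : Orthonormal ℝ w0 := by
    rw [orthonormal_iff_ite]
    intro p p'
    rw [hinner p p', orthonormal_iff_ite.mp bU.orthonormal p.1 p'.1,
      orthonormal_iff_ite.mp bV.orthonormal p.2 p'.2]
    by_cases h1 : p.1 = p'.1 <;> by_cases h2 : p.2 = p'.2 <;>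
      simp [h1, h2, Prod.ext_iff]
  have hspan : ⊤ ≤ Submodule.span ℝ (Set.range w0) := by
    rw [hON.linearIndependent.span_eq_top_of_card_eq_finrank' (by simp [finrank_euclideanSpace])]
  set w : OrthonormalBasis (Fin dL × Fin d0) ℝ (EuclideanSpace ℝ (Fin dL × Fin d0)) :=
    OrthonormalBasis.mk hON hspan with hw
  -- the eigenvalue function
  set d : Fin dL × Fin d0 → ℝ := fun p =>
    (if h : (p.1 : ℕ) < r then lam ⟨(p.1 : ℕ), h⟩ ^ (2 * (L - 1)) else 0)
    + (if h : (p.2 : ℕ) < r then lam ⟨(p.2 : ℕ), h⟩ ^ (2 * (L - 1)) else 0)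
    + ∑ l ∈ Finset.Icc 2 (L - 1),
        (if h : (p.1 : ℕ) < r then lam ⟨(p.1 : ℕ), h⟩ ^ (2 * (L - l)) else 0)
        * (if h : (p.2 : ℕ) < r then lam ⟨(p.2 : ℕ), h⟩ ^ (2 * (l - 1)) else 0) with hd
  refine ⟨w, d, ?_, fun p => rfl⟩
  intro p
  -- mulVec computation
  have hGw : G *ᵥ (wfun p) = d p • (wfun p) := by
    rw [hGdef, add_mulVec, add_mulVec, sum_mulVec']
    have t1 : ((U1 * Matrix.diagonal (fun i => lam i ^ (2 * (L - 1))) * U1ᵀ) ⊗ₖ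
        (1 : Matrix (Fin d0) (Fin d0) ℝ)) *ᵥ (wfun p)
        = fun q : Fin dL × Fin d0 =>
          ((if h : (p.1 : ℕ) < r then lam ⟨(p.1 : ℕ), h⟩ ^ (2 * (L - 1)) else 0) * bU p.1 q.1)
            * bV p.2 q.2 := by
      rw [show wfun p = fun q : Fin dL × Fin d0 =>
        (fun q1 => bU p.1 q1) q.1 * (fun q2 => bV p.2 q2) q.2 from rfl]
      rw [kron_mulVec]
      funext q
      rw [Matrix.one_mulVec,
        sandwich_mulVec hrdL U1 bU hbU (fun i => lam i ^ (2 * (L - 1))) p.1]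
      simp only [PiLp.smul_apply, Pi.smul_apply, smul_eq_mul]
    have t2 : ((1 : Matrix (Fin dL) (Fin dL) ℝ) ⊗ₖ
        (V1 * Matrix.diagonal (fun i => lam i ^ (2 * (L - 1))) * V1ᵀ)) *ᵥ (wfun p)
        = fun q : Fin dL × Fin d0 =>
          bU p.1 q.1 *
          ((if h : (p.2 : ℕ) < r then lam ⟨(p.2 : ℕ), h⟩ ^ (2 * (L - 1)) else 0) * bV p.2 q.2) := by
      rw [show wfun p = fun q : Fin dL × Fin d0 =>
        (fun q1 => bU p.1 q1) q.1 * (fun q2 => bV p.2 q2) q.2 from rfl]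
      rw [kron_mulVec]
      funext q
      rw [Matrix.one_mulVec,
        sandwich_mulVec hrd0 V1 bV hbV (fun i => lam i ^ (2 * (L - 1))) p.2]
      simp only [PiLp.smul_apply, Pi.smul_apply, smul_eq_mul]
    have t3 : ∀ l ∈ Finset.Icc 2 (L - 1),
        ((U1 * Matrix.diagonal (fun i => lam i ^ (2 * (L - l))) * U1ᵀ) ⊗ₖ
          (V1 * Matrix.diagonal (fun i => lam i ^ (2 * (l - 1))) * V1ᵀ)) *ᵥ (wfun p)
        = fun q : Fin dL × Fin d0 =>
            ((if h : (p.1 : ℕ) < r then lam ⟨(p.1 : ℕ), h⟩ ^ (2 * (L - l)) else 0) * bU p.1 q.1)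
            * ((if h : (p.2 : ℕ) < r then lam ⟨(p.2 : ℕ), h⟩ ^ (2 * (l - 1)) else 0)
                * bV p.2 q.2) := by
      intro l _
      rw [show wfun p = fun q : Fin dL × Fin d0 =>
        (fun q1 => bU p.1 q1) q.1 * (fun q2 => bV p.2 q2) q.2 from rfl]
      rw [kron_mulVec]
      funext q
      rw [sandwich_mulVec hrdL U1 bU hbU (fun i => lam i ^ (2 * (L - l))) p.1,
        sandwich_mulVec hrd0 V1 bV hbV (fun i => lam i ^ (2 * (l - 1))) p.2]
      simp only [PiLp.smul_apply, Pi.smul_apply, smul_eq_mul]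
    rw [t1, t2, Finset.sum_congr rfl t3]
    funext q
    simp only [Pi.add_apply, Pi.smul_apply, smul_eq_mul, Finset.sum_apply, hd, hwfun]
    rw [show (∑ l ∈ Finset.Icc 2 (L - 1),
        ((if h : (p.1 : ℕ) < r then lam ⟨(p.1 : ℕ), h⟩ ^ (2 * (L - l)) else 0) * bU p.1 q.1)
        * ((if h : (p.2 : ℕ) < r then lam ⟨(p.2 : ℕ), h⟩ ^ (2 * (l - 1)) else 0) * bV p.2 q.2))
      = (∑ l ∈ Finset.Icc 2 (L - 1),
          (if h : (p.1 : ℕ) < r then lam ⟨(p.1 : ℕ), h⟩ ^ (2 * (L - l)) else 0)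
          * (if h : (p.2 : ℕ) < r then lam ⟨(p.2 : ℕ), h⟩ ^ (2 * (l - 1)) else 0))
        * (bU p.1 q.1 * bV p.2 q.2) from by
        rw [Finset.sum_mul]; exact Finset.sum_congr rfl fun l _ => by ring]
    ring
  -- transfer to toEuclideanLin
  have hwp : w p = w0 p := by rw [hw, OrthonormalBasis.coe_mk]
  rw [hwp, hw0]
  simp only [WithLp.equiv_symm_apply, Matrix.toEuclideanLin_apply_piLp_toLp]
  rw [hGw]
  rfl


end Statement16Aux


/-- Hessian bifurcation with a perturbation: if `G` is the general Gram
matrix of the outer-product Hessian with `λᵢ ∈ [m − δ, m + δ]`, `0 < δ < m`,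
`(m + δ)/(m − δ) < L^{1/(2(L−1))}`, and `E` is symmetric with `‖E‖₂ ≤ ε`, then the
eigenvalues of `H = G + E` split into a dominant group of `r²` in
`[L(m−δ)^{2(L−1)} − ε, L(m+δ)^{2(L−1)} + ε]`, a bulk group of `(d₀ + d_L − 2r)r` in
`[(m−δ)^{2(L−1)} − ε, (m+δ)^{2(L−1)} + ε]`, and `(d_L − r)(d₀ − r)` eigenvalues in
`[−ε, ε]`; moreover if `ε < (m−δ)^{2(L−1)}` the dominant/bulk ratio is pinched between
`L((m−δ)^{2(L−1)} − ε/L)/((m+δ)^{2(L−1)} + ε)` and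
`L((m+δ)^{2(L−1)} + ε/L)/((m−δ)^{2(L−1)} − ε)`. -/
theorem statement16 (L d0 dL r : ℕ) (hL : 2 ≤ L) (hd0 : 1 ≤ d0) (hdL : 1 ≤ dL)
    (hr1 : 1 ≤ r) (hr : r ≤ min d0 dL)
    (U1 : Matrix (Fin dL) (Fin r) ℝ) (V1 : Matrix (Fin d0) (Fin r) ℝ)
    (hU1 : U1ᵀ * U1 = 1) (hV1 : V1ᵀ * V1 = 1)
    (lam : Fin r → ℝ) (hlam : ∀ i, 0 < lam i)
    (m δ : ℝ) (hδ : 0 < δ) (hδm : δ < m)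
    (hmem : ∀ i, lam i ∈ Set.Icc (m - δ) (m + δ))
    (hgap : (m + δ) / (m - δ) < (L : ℝ) ^ ((1 : ℝ) / (2 * ((L : ℝ) - 1))))
    (G : Matrix (Fin dL × Fin d0) (Fin dL × Fin d0) ℝ)
    (hGdef : G =
      (U1 * Matrix.diagonal (fun i => lam i ^ (2 * (L - 1))) * U1ᵀ) ⊗ₖ
          (1 : Matrix (Fin d0) (Fin d0) ℝ) +
        (1 : Matrix (Fin dL) (Fin dL) ℝ) ⊗ₖ
          (V1 * Matrix.diagonal (fun i => lam i ^ (2 * (L - 1))) * V1ᵀ) +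
        ∑ l ∈ Finset.Icc 2 (L - 1),
          (U1 * Matrix.diagonal (fun i => lam i ^ (2 * (L - l))) * U1ᵀ) ⊗ₖ
            (V1 * Matrix.diagonal (fun i => lam i ^ (2 * (l - 1))) * V1ᵀ))
    (ε : ℝ) (hε : 0 ≤ ε)
    (E : Matrix (Fin dL × Fin d0) (Fin dL × Fin d0) ℝ)
    (hE : E.IsHermitian) (hEnorm : matSpectralNorm E ≤ ε)
    (hH : (G + E).IsHermitian) :
    ∃ S1 S2 S3 : Finset (Fin dL × Fin d0),
      Disjoint S1 S2 ∧ Disjoint S1 S3 ∧ Disjoint S2 S3 ∧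
      S1 ∪ S2 ∪ S3 = Finset.univ ∧
      S1.card = r * r ∧ S2.card = (d0 + dL - 2 * r) * r ∧
      S3.card = (dL - r) * (d0 - r) ∧
      (∀ k ∈ S1, hH.eigenvalues k ∈
        Set.Icc ((L : ℝ) * (m - δ) ^ (2 * (L - 1)) - ε)
          ((L : ℝ) * (m + δ) ^ (2 * (L - 1)) + ε)) ∧
      (∀ k ∈ S2, hH.eigenvalues k ∈
        Set.Icc ((m - δ) ^ (2 * (L - 1)) - ε) ((m + δ) ^ (2 * (L - 1)) + ε)) ∧
      (∀ k ∈ S3, hH.eigenvalues k ∈ Set.Icc (-ε) ε) ∧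
      (ε < (m - δ) ^ (2 * (L - 1)) →
        ∀ k ∈ S1, ∀ k' ∈ S2,
          (L : ℝ) * ((m - δ) ^ (2 * (L - 1)) - ε / (L : ℝ)) /
              ((m + δ) ^ (2 * (L - 1)) + ε) ≤
            hH.eigenvalues k / hH.eigenvalues k' ∧
          hH.eigenvalues k / hH.eigenvalues k' ≤
            (L : ℝ) * ((m + δ) ^ (2 * (L - 1)) + ε / (L : ℝ)) /
              ((m - δ) ^ (2 * (L - 1)) - ε)) := by
  classical
  have hrd0 : r ≤ d0 := le_trans hr (min_le_left _ _)
  have hrdL : r ≤ dL := le_trans hr (min_le_right _ _)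
  obtain ⟨w, d, hwEig, hdval⟩ := Statement16Aux.exists_w hrd0 hrdL U1 V1 hU1 hV1 lam G hGdef
  have hm0 : (0:ℝ) < m - δ := by linarith
  have hmm : (0:ℝ) < m + δ := by linarith
  have hL2 : (2:ℝ) ≤ (L:ℝ) := by exact_mod_cast hL
  have hMU : (0:ℝ) < (m - δ) ^ (2*(L-1)) := pow_pos hm0 _
  have hMU2 : (0:ℝ) < (m + δ) ^ (2*(L-1)) := pow_pos hmm _
  have hpowle : (m-δ)^(2*(L-1)) ≤ (m+δ)^(2*(L-1)) := pow_le_pow_left₀ hm0.le (by linarith) _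
  have hIcc2 : ∀ l ∈ Finset.Icc 2 (L-1), 2*(L-l) + 2*(l-1) = 2*(L-1) := by
    intro l hl; rw [Finset.mem_Icc] at hl; omega
  have hlam_le : ∀ (i : Fin r) (k : ℕ), lam i ^ k ≤ (m+δ)^k := fun i k =>
    pow_le_pow_left₀ (le_of_lt (hlam i)) (hmem i).2 k
  have hlam_ge : ∀ (i : Fin r) (k : ℕ), (m-δ)^k ≤ lam i ^ k := fun i k =>
    pow_le_pow_left₀ hm0.le (hmem i).1 k
  have hcard2 : ((Finset.Icc 2 (L-1)).card : ℝ) = (L:ℝ) - 2 := by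
    rw [Nat.card_Icc]
    rw [show L - 1 + 1 - 2 = L - 2 by omega]
    push_cast [Nat.cast_sub hL]
    ring
  -- bounds on the eigenvalues `d` of `G`
  have hdom : ∀ p : Fin dL × Fin d0, ((p.1:ℕ) < r) → ((p.2:ℕ) < r) →
      ((L:ℝ) * (m-δ)^(2*(L-1)) ≤ d p ∧ d p ≤ (L:ℝ) * (m+δ)^(2*(L-1))) := by
    intro p h1 h2
    have hdp : d p = lam ⟨(p.1:ℕ), h1⟩ ^ (2*(L-1)) + lam ⟨(p.2:ℕ), h2⟩ ^ (2*(L-1))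
        + ∑ l ∈ Finset.Icc 2 (L-1),
            lam ⟨(p.1:ℕ), h1⟩ ^ (2*(L-l)) * lam ⟨(p.2:ℕ), h2⟩ ^ (2*(l-1)) := by
      rw [hdval p]; simp only [dif_pos h1, dif_pos h2]
    constructor
    · have hterm : ∀ l ∈ Finset.Icc 2 (L-1),
          (m-δ)^(2*(L-1)) ≤ lam ⟨(p.1:ℕ), h1⟩ ^ (2*(L-l)) * lam ⟨(p.2:ℕ), h2⟩ ^ (2*(l-1)) := by
        intro l hl
        calc (m-δ)^(2*(L-1)) = (m-δ)^(2*(L-l)) * (m-δ)^(2*(l-1)) := by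
              rw [← pow_add, hIcc2 l hl]
          _ ≤ _ := mul_le_mul (hlam_ge _ _) (hlam_ge _ _) (pow_nonneg hm0.le _)
                (le_trans (pow_nonneg hm0.le _) (hlam_ge _ _))
      have hsum := Finset.sum_le_sum hterm
      rw [Finset.sum_const, nsmul_eq_mul, hcard2] at hsum
      have h1' := hlam_ge ⟨(p.1:ℕ), h1⟩ (2*(L-1))
      have h2' := hlam_ge ⟨(p.2:ℕ), h2⟩ (2*(L-1))
      rw [hdp]; linarith
    · have hterm : ∀ l ∈ Finset.Icc 2 (L-1),
          lam ⟨(p.1:ℕ), h1⟩ ^ (2*(L-l)) * lam ⟨(p.2:ℕ), h2⟩ ^ (2*(l-1)) ≤ (m+δ)^(2*(L-1)) := by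
        intro l hl
        calc lam ⟨(p.1:ℕ), h1⟩ ^ (2*(L-l)) * lam ⟨(p.2:ℕ), h2⟩ ^ (2*(l-1))
            ≤ (m+δ)^(2*(L-l)) * (m+δ)^(2*(l-1)) :=
              mul_le_mul (hlam_le _ _) (hlam_le _ _)
                (pow_nonneg (le_of_lt (hlam _)) _) (pow_nonneg hmm.le _)
          _ = (m+δ)^(2*(L-1)) := by rw [← pow_add, hIcc2 l hl]
      have hsum := Finset.sum_le_sum hterm
      rw [Finset.sum_const, nsmul_eq_mul, hcard2] at hsum
      have h1' := hlam_le ⟨(p.1:ℕ), h1⟩ (2*(L-1))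
      have h2' := hlam_le ⟨(p.2:ℕ), h2⟩ (2*(L-1))
      rw [hdp]; linarith
  have hbulk1 : ∀ p : Fin dL × Fin d0, ((p.1:ℕ) < r) → ¬((p.2:ℕ) < r) →
      ((m-δ)^(2*(L-1)) ≤ d p ∧ d p ≤ (m+δ)^(2*(L-1))) := by
    intro p h1 h2
    have hdp : d p = lam ⟨(p.1:ℕ), h1⟩ ^ (2*(L-1)) := by
      rw [hdval p]; simp [dif_pos h1, dif_neg h2]
    rw [hdp]; exact ⟨hlam_ge _ _, hlam_le _ _⟩
  have hbulk2 : ∀ p : Fin dL × Fin d0, ¬((p.1:ℕ) < r) → ((p.2:ℕ) < r) →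
      ((m-δ)^(2*(L-1)) ≤ d p ∧ d p ≤ (m+δ)^(2*(L-1))) := by
    intro p h1 h2
    have hdp : d p = lam ⟨(p.2:ℕ), h2⟩ ^ (2*(L-1)) := by
      rw [hdval p]; simp [dif_neg h1, dif_pos h2]
    rw [hdp]; exact ⟨hlam_ge _ _, hlam_le _ _⟩
  have hzero : ∀ p : Fin dL × Fin d0, ¬((p.1:ℕ) < r) → ¬((p.2:ℕ) < r) → d p = 0 := by
    intro p h1 h2; rw [hdval p]; simp [dif_neg h1, dif_neg h2]
  have hglob0 : ∀ p : Fin dL × Fin d0, 0 ≤ d p := by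
    intro p
    by_cases h1 : (p.1:ℕ) < r <;> by_cases h2 : (p.2:ℕ) < r
    · have := (hdom p h1 h2).1; nlinarith
    · have := (hbulk1 p h1 h2).1; linarith
    · have := (hbulk2 p h1 h2).1; linarith
    · rw [hzero p h1 h2]
  have hglobHi : ∀ p : Fin dL × Fin d0, d p ≤ (L:ℝ) * (m+δ)^(2*(L-1)) := by
    intro p
    by_cases h1 : (p.1:ℕ) < r <;> by_cases h2 : (p.2:ℕ) < r
    · exact (hdom p h1 h2).2
    · have := (hbulk1 p h1 h2).2; nlinarith
    · have := (hbulk2 p h1 h2).2; nlinarith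
    · rw [hzero p h1 h2]; positivity
  -- the two counting principles applied to H = G + E
  have countGe : ∀ (S : Finset (Fin dL × Fin d0)) (a : ℝ), (∀ p ∈ S, a ≤ d p) →
      S.card ≤ (Finset.univ.filter fun i => a - ε ≤ hH.eigenvalues i).card := by
    intro S a hda
    exact Statement16Aux.card_le_count_ge (G + E) hH w S (a - ε)
      (fun x hx => Statement16Aux.rayleigh_lower G E w d hwEig ε hEnorm S a hda x hx)
  have countLe : ∀ (S : Finset (Fin dL × Fin d0)) (a : ℝ), (∀ p ∈ S, d p ≤ a) →
      S.card ≤ (Finset.univ.filter fun i => hH.eigenvalues i ≤ a + ε).card := by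
    intro S a hda
    exact Statement16Aux.card_le_count_le (G + E) hH w S (a + ε)
      (fun x hx => Statement16Aux.rayleigh_upper G E w d hwEig ε hEnorm S a hda x hx)
  -- index subsets of the eigenbasis
  set Sdom := Finset.univ.filter
    (fun p : Fin dL × Fin d0 => (p.1:ℕ) < r ∧ (p.2:ℕ) < r) with hSdomdef
  set Sbig := Finset.univ.filter
    (fun p : Fin dL × Fin d0 => (p.1:ℕ) < r ∨ (p.2:ℕ) < r) with hSbigdef
  set Szero := Finset.univ.filter
    (fun p : Fin dL × Fin d0 => ¬((p.1:ℕ) < r) ∧ ¬((p.2:ℕ) < r)) with hSzerodef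
  have hNcard : Fintype.card (Fin dL × Fin d0) = dL * d0 := by simp
  have hSdomCard : Sdom.card = r * r := by
    rw [hSdomdef, ← Finset.univ_product_univ,
      Finset.filter_product (fun i : Fin dL => (i:ℕ) < r) (fun j : Fin d0 => (j:ℕ) < r),
      Finset.card_product,
      Statement16Aux.card_filter_lt r hrdL, Statement16Aux.card_filter_lt r hrd0]
  have hSzeroCard : Szero.card = (dL - r) * (d0 - r) := by
    rw [hSzerodef, ← Finset.univ_product_univ,
      Finset.filter_product (fun i : Fin dL => ¬ ((i:ℕ) < r)) (fun j : Fin d0 => ¬ ((j:ℕ) < r)),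
      Finset.card_product,
      Statement16Aux.card_filter_not_lt r hrdL, Statement16Aux.card_filter_not_lt r hrd0]
  have hSbigCard : Sbig.card + (dL - r) * (d0 - r) = dL * d0 := by
    have hsplit := Finset.card_filter_add_card_filter_not
      (s := (Finset.univ : Finset (Fin dL × Fin d0)))
      (p := fun p : Fin dL × Fin d0 => (p.1:ℕ) < r ∨ (p.2:ℕ) < r)
    have hcongr : (Finset.univ.filter
        fun p : Fin dL × Fin d0 => ¬ ((p.1:ℕ) < r ∨ (p.2:ℕ) < r)) = Szero := by
      rw [hSzerodef]
      apply Finset.filter_congr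
      intro p _
      exact not_or
    rw [hcongr, hSzeroCard, Finset.card_univ, hNcard] at hsplit
    rw [← hSbigdef] at hsplit
    exact hsplit
  obtain ⟨a0, ha0⟩ := Nat.exists_eq_add_of_le hrd0
  obtain ⟨b0, hb0⟩ := Nat.exists_eq_add_of_le hrdL
  have harith : (dL - r) * (d0 - r) + (d0 + dL - 2*r) * r + r * r = dL * d0 := by
    have e1 : dL - r = b0 := by omega
    have e2 : d0 - r = a0 := by omega
    have e3 : d0 + dL - 2*r = a0 + b0 := by omega
    rw [e1, e2, e3, ha0, hb0]; ring
  -- the six counting facts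
  have cA : r * r ≤ (Finset.univ.filter
      fun i => (L:ℝ)*(m-δ)^(2*(L-1)) - ε ≤ hH.eigenvalues i).card := by
    have := countGe Sdom ((L:ℝ)*(m-δ)^(2*(L-1))) (fun p hp => by
      rw [hSdomdef, Finset.mem_filter] at hp
      exact (hdom p hp.2.1 hp.2.2).1)
    rwa [hSdomCard] at this
  have cB : dL * d0 - r * r ≤ (Finset.univ.filter
      fun i => hH.eigenvalues i ≤ (m+δ)^(2*(L-1)) + ε).card := by
    have hd2 : ∀ p ∈ Sdomᶜ, d p ≤ (m+δ)^(2*(L-1)) := by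
      intro p hp
      rw [Finset.mem_compl, hSdomdef, Finset.mem_filter] at hp
      have hnp : ¬ ((p.1:ℕ) < r ∧ (p.2:ℕ) < r) := fun h => hp ⟨Finset.mem_univ _, h⟩
      by_cases h1 : (p.1:ℕ) < r
      · by_cases h2 : (p.2:ℕ) < r
        · exact absurd ⟨h1, h2⟩ hnp
        · exact (hbulk1 p h1 h2).2
      · by_cases h2 : (p.2:ℕ) < r
        · exact (hbulk2 p h1 h2).2
        · rw [hzero p h1 h2]; positivity
    have := countLe Sdomᶜ _ hd2
    rwa [Finset.card_compl, hSdomCard, hNcard] at this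
  have cC : dL * d0 - (dL - r) * (d0 - r) ≤ (Finset.univ.filter
      fun i => (m-δ)^(2*(L-1)) - ε ≤ hH.eigenvalues i).card := by
    have hd2 : ∀ p ∈ Sbig, (m-δ)^(2*(L-1)) ≤ d p := by
      intro p hp
      rw [hSbigdef, Finset.mem_filter] at hp
      rcases hp.2 with h1 | h2
      · by_cases h2 : (p.2:ℕ) < r
        · have := (hdom p h1 h2).1; nlinarith
        · exact (hbulk1 p h1 h2).1
      · by_cases h1 : (p.1:ℕ) < r
        · have := (hdom p h1 h2).1; nlinarith
        · exact (hbulk2 p h1 h2).1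
    have := countGe Sbig _ hd2
    omega
  have cZ : (dL - r) * (d0 - r) ≤ (Finset.univ.filter
      fun i => hH.eigenvalues i ≤ ε).card := by
    have hd2 : ∀ p ∈ Szero, d p ≤ (0:ℝ) := by
      intro p hp
      rw [hSzerodef, Finset.mem_filter] at hp
      rw [hzero p hp.2.1 hp.2.2]
    have := countLe Szero 0 hd2
    rw [hSzeroCard] at this
    simpa using this
  have cLo : ∀ i, -ε ≤ hH.eigenvalues i := by
    have := countGe Finset.univ 0 (fun p _ => hglob0 p)
    rw [Finset.card_univ] at this
    have huniv : (Finset.univ.filter fun i => (0:ℝ) - ε ≤ hH.eigenvalues i) = Finset.univ :=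
      Finset.eq_univ_of_card _ (le_antisymm (Finset.card_le_univ _) this)
    intro i
    have hm2 : i ∈ (Finset.univ.filter fun i => (0:ℝ) - ε ≤ hH.eigenvalues i) := by
      rw [huniv]; exact Finset.mem_univ i
    have := (Finset.mem_filter.mp hm2).2
    linarith
  have cHi : ∀ i, hH.eigenvalues i ≤ (L:ℝ) * (m+δ)^(2*(L-1)) + ε := by
    have := countLe Finset.univ ((L:ℝ) * (m+δ)^(2*(L-1))) (fun p _ => hglobHi p)
    rw [Finset.card_univ] at this
    have huniv : (Finset.univ.filter
        fun i => hH.eigenvalues i ≤ (L:ℝ) * (m+δ)^(2*(L-1)) + ε) = Finset.univ :=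
      Finset.eq_univ_of_card _ (le_antisymm (Finset.card_le_univ _) this)
    intro i
    have hm2 : i ∈ (Finset.univ.filter
        fun i => hH.eigenvalues i ≤ (L:ℝ) * (m+δ)^(2*(L-1)) + ε) := by
      rw [huniv]; exact Finset.mem_univ i
    exact (Finset.mem_filter.mp hm2).2
  -- sorting
  set NC := Fintype.card (Fin dL × Fin d0) with hNC
  set e0 : (Fin dL × Fin d0) ≃ Fin NC := Fintype.equivFin (Fin dL × Fin d0) with he0
  set f0 : Fin NC → ℝ := fun k => hH.eigenvalues (e0.symm k) with hf0
  set F : Fin NC ≃ (Fin dL × Fin d0) := (Tuple.sort f0).trans e0.symm with hF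
  have hgmono : Monotone (fun k => hH.eigenvalues (F k)) := Tuple.monotone_sort f0
  have htrans : ∀ (pred : ℝ → Prop) [DecidablePred pred],
      (Finset.univ.filter fun k : Fin NC => pred (hH.eigenvalues (F k))).card
        = (Finset.univ.filter fun i => pred (hH.eigenvalues i)).card := by
    intro pred _
    exact Statement16Aux.card_filter_equiv F (fun i => pred (hH.eigenvalues i))
  -- threshold facts on the sorted sequence
  have hNCval : NC = dL * d0 := hNcard
  have b1 : ∀ k : Fin NC, NC - r * r ≤ (k:ℕ) →
      (L:ℝ)*(m-δ)^(2*(L-1)) - ε ≤ hH.eigenvalues (F k) := by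
    apply Statement16Aux.mono_tail hgmono
    rw [htrans (fun t => (L:ℝ)*(m-δ)^(2*(L-1)) - ε ≤ t)]
    exact cA
  have b2 : ∀ k : Fin NC, (k:ℕ) < (dL - r) * (d0 - r) → hH.eigenvalues (F k) ≤ ε := by
    apply Statement16Aux.mono_head hgmono
    rw [htrans (fun t => t ≤ ε)]
    exact cZ
  have b3 : ∀ k : Fin NC, NC - (dL * d0 - (dL - r) * (d0 - r)) ≤ (k:ℕ) →
      (m-δ)^(2*(L-1)) - ε ≤ hH.eigenvalues (F k) := by
    apply Statement16Aux.mono_tail hgmono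
    rw [htrans (fun t => (m-δ)^(2*(L-1)) - ε ≤ t)]
    exact cC
  have b4 : ∀ k : Fin NC, (k:ℕ) < dL * d0 - r * r →
      hH.eigenvalues (F k) ≤ (m+δ)^(2*(L-1)) + ε := by
    apply Statement16Aux.mono_head hgmono
    rw [htrans (fun t => t ≤ (m+δ)^(2*(L-1)) + ε)]
    exact cB
  -- abbreviations for the three cardinalities
  have hzN : (dL - r) * (d0 - r) ≤ dL * d0 := by omega
  have hzsN : (dL - r) * (d0 - r) + (d0 + dL - 2*r) * r ≤ dL * d0 := by omega
  -- the three position sets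
  set T3 := Finset.univ.filter
    (fun k : Fin NC => (k:ℕ) < (dL - r) * (d0 - r)) with hT3
  set T2 := Finset.univ.filter
    (fun k : Fin NC => (dL - r) * (d0 - r) ≤ (k:ℕ) ∧
      (k:ℕ) < (dL - r) * (d0 - r) + (d0 + dL - 2*r) * r) with hT2
  set T1 := Finset.univ.filter
    (fun k : Fin NC => (dL - r) * (d0 - r) + (d0 + dL - 2*r) * r ≤ (k:ℕ)) with hT1
  refine ⟨T1.image F, T2.image F, T3.image F, ?_, ?_, ?_, ?_, ?_, ?_, ?_, ?_, ?_, ?_, ?_⟩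
  · rw [Finset.disjoint_image F.injective]
    rw [Finset.disjoint_left]
    intro k hk1 hk2
    rw [hT1, Finset.mem_filter] at hk1
    rw [hT2, Finset.mem_filter] at hk2
    omega
  · rw [Finset.disjoint_image F.injective]
    rw [Finset.disjoint_left]
    intro k hk1 hk2
    rw [hT1, Finset.mem_filter] at hk1
    rw [hT3, Finset.mem_filter] at hk2
    omega
  · rw [Finset.disjoint_image F.injective]
    rw [Finset.disjoint_left]
    intro k hk1 hk2
    rw [hT2, Finset.mem_filter] at hk1
    rw [hT3, Finset.mem_filter] at hk2
    omega
  · rw [← Finset.image_union, ← Finset.image_union]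
    have hTuniv : T1 ∪ T2 ∪ T3 = Finset.univ := by
      ext k
      simp only [hT1, hT2, hT3, Finset.mem_union, Finset.mem_filter, Finset.mem_univ,
        true_and, iff_true]
      omega
    rw [hTuniv]
    exact Finset.image_univ_equiv F
  · rw [Finset.card_image_of_injective _ F.injective, hT1,
      Statement16Aux.card_filter_ge _ (by rw [hNCval]; omega), hNCval]
    omega
  · rw [Finset.card_image_of_injective _ F.injective, hT2,
      Statement16Aux.card_filter_Ico _ _ (by omega) (by rw [hNCval]; omega)]
    omega
  · rw [Finset.card_image_of_injective _ F.injective, hT3,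
      Statement16Aux.card_filter_lt _ (by rw [hNCval]; omega)]
  · intro p hp
    obtain ⟨k, hk, rfl⟩ := Finset.mem_image.mp hp
    rw [hT1, Finset.mem_filter] at hk
    refine Set.mem_Icc.mpr ⟨?_, cHi _⟩
    apply b1
    have : NC - r * r ≤ (dL - r) * (d0 - r) + (d0 + dL - 2*r) * r := by
      rw [hNCval]; omega
    omega
  · intro p hp
    obtain ⟨k, hk, rfl⟩ := Finset.mem_image.mp hp
    rw [hT2, Finset.mem_filter] at hk
    refine Set.mem_Icc.mpr ⟨?_, ?_⟩
    · apply b3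
      have : NC - (dL * d0 - (dL - r) * (d0 - r)) ≤ (dL - r) * (d0 - r) := by
        rw [hNCval]; omega
      omega
    · apply b4
      omega
  · intro p hp
    obtain ⟨k, hk, rfl⟩ := Finset.mem_image.mp hp
    rw [hT3, Finset.mem_filter] at hk
    exact Set.mem_Icc.mpr ⟨cLo _, b2 k hk.2⟩
  · intro hsmall p hp p' hp'
    obtain ⟨k, hk, rfl⟩ := Finset.mem_image.mp hp
    obtain ⟨k', hk', rfl⟩ := Finset.mem_image.mp hp'
    rw [hT1, Finset.mem_filter] at hk
    rw [hT2, Finset.mem_filter] at hk'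
    have hdomLo : (L:ℝ)*(m-δ)^(2*(L-1)) - ε ≤ hH.eigenvalues (F k) := by
      apply b1
      have : NC - r * r ≤ (dL - r) * (d0 - r) + (d0 + dL - 2*r) * r := by
        rw [hNCval]; omega
      omega
    have hdomHi : hH.eigenvalues (F k) ≤ (L:ℝ)*(m+δ)^(2*(L-1)) + ε := cHi _
    have hbulkLo : (m-δ)^(2*(L-1)) - ε ≤ hH.eigenvalues (F k') := by
      apply b3
      have : NC - (dL * d0 - (dL - r) * (d0 - r)) ≤ (dL - r) * (d0 - r) := by
        rw [hNCval]; omega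
      omega
    have hbulkHi : hH.eigenvalues (F k') ≤ (m+δ)^(2*(L-1)) + ε := by
      apply b4
      omega
    have hCpos : (0:ℝ) < (m-δ)^(2*(L-1)) - ε := by linarith
    have hApos : (0:ℝ) < (L:ℝ)*(m-δ)^(2*(L-1)) - ε := by nlinarith
    have hk'pos : (0:ℝ) < hH.eigenvalues (F k') := lt_of_lt_of_le hCpos hbulkLo
    have hkpos : (0:ℝ) ≤ hH.eigenvalues (F k) := le_of_lt (lt_of_lt_of_le hApos hdomLo)
    have hLne : (L:ℝ) ≠ 0 := by linarith
    constructor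
    · have heq : (L:ℝ) * ((m-δ)^(2*(L-1)) - ε / (L:ℝ))
          = (L:ℝ)*(m-δ)^(2*(L-1)) - ε := by
        field_simp
      rw [heq]
      exact div_le_div₀ hkpos hdomLo hk'pos hbulkHi
    · have heq : (L:ℝ) * ((m+δ)^(2*(L-1)) + ε / (L:ℝ))
          = (L:ℝ)*(m+δ)^(2*(L-1)) + ε := by
        field_simp
      rw [heq]
      have hHiNonneg : (0:ℝ) ≤ (L:ℝ)*(m+δ)^(2*(L-1)) + ε := by nlinarith
      exact div_le_div₀ hHiNonneg hdomHi hCpos hbulkLo
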